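/- In the quantized enveloping algebra negative half for the graph with two vertices i, j joined by an edge (i·j = −1), over ℚ(q): the elements θ_i^{(a)}θ_j^{(b)}θ_i^{(c)} with b ≥ a + c, together with θ_j^{(c)}θ_i^{(b)}θ_j^{(a)} with b > a + c, span the algebra f as a ℚ(q)-vector space, where f is the quotient of the free algebra on θ_i, θ_j by the quantum Serre relations (q+q⁻¹)θ_iθ_jθ_i = θ_i²θ_j + θ_jθ_i² and (q+q⁻¹)θ_jθ_iθ_j = θ_j²θ_i + θ_iθ_j². -/

import Mathlib

noncomputable section

/-- The field ℚ(q). -/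
abbrev Qq : Type := RatFunc ℚ

/-- The variable q of ℚ(q). -/
def qv : Qq := RatFunc.X

/-- The quantum integer [n] = (qⁿ − q⁻ⁿ)/(q − q⁻¹). -/
def qint (n : ℕ) : Qq := (qv ^ n - qv⁻¹ ^ n) / (qv - qv⁻¹)

/-- The quantum factorial [n]! = [n][n−1]⋯[1]. -/
def qfac : ℕ → Qq
  | 0 => 1
  | n + 1 => qint (n + 1) * qfac n

/-- Generators θ_i (= true) and θ_j (= false) of the free algebra. -/
def θfree (b : Bool) : FreeAlgebra Qq Bool := FreeAlgebra.ι Qq b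

/-- The two quantum Serre relations: (q+q⁻¹)θ_iθ_jθ_i = θ_i²θ_j + θ_jθ_i²,
and the same with i and j exchanged. -/
inductive SerreRel : FreeAlgebra Qq Bool → FreeAlgebra Qq Bool → Prop
  | serre (b : Bool) :
      SerreRel ((qv + qv⁻¹) • (θfree b * θfree (!b) * θfree b))
        (θfree b * θfree b * θfree (!b) + θfree (!b) * θfree b * θfree b)

/-- f, the negative half of quantum 𝔰𝔩₃ over ℚ(q): the quotient of the free algebra
on θ_i, θ_j by the quantum Serre relations. -/
abbrev Uminus : Type := RingQuot SerreRel

/-- The generators θ_i, θ_j of f. -/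
def θ (b : Bool) : Uminus := RingQuot.mkAlgHom Qq SerreRel (θfree b)

/-- Divided power θ^{(a)} = θ^a / [a]!. -/
def dp (x : Uminus) (a : ℕ) : Uminus := (qfac a)⁻¹ • x ^ a

lemma qv_ne_zero : qv ≠ 0 := RatFunc.X_ne_zero

lemma qv_pow_ne_one {n : ℕ} (hn : n ≠ 0) : qv ^ n ≠ 1 := by
  intro h
  have hinj := IsFractionRing.injective (Polynomial ℚ) Qq
  have h2 : (Polynomial.X : Polynomial ℚ) ^ n = 1 := by
    apply hinj
    simpa [qv, map_pow, RatFunc.algebraMap_X] using h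
  have := congrArg Polynomial.natDegree h2
  simp [Polynomial.natDegree_X_pow] at this
  exact hn this

lemma qsub_ne_zero : qv - qv⁻¹ ≠ 0 := by
  intro h
  rw [sub_eq_zero] at h
  have : qv ^ 2 = 1 := by
    rw [sq]
    nth_rewrite 2 [h]
    exact mul_inv_cancel₀ qv_ne_zero
  exact qv_pow_ne_one (by norm_num) this

lemma qpow_sub_ne_zero {n : ℕ} (hn : n ≠ 0) : qv ^ n - qv⁻¹ ^ n ≠ 0 := by
  intro h
  rw [sub_eq_zero, inv_pow] at h
  have : qv ^ (2 * n) = 1 := by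
    have hq : qv ^ n ≠ 0 := pow_ne_zero _ qv_ne_zero
    rw [two_mul, pow_add]
    nth_rewrite 2 [h]
    exact mul_inv_cancel₀ hq
  exact qv_pow_ne_one (by omega) this

lemma qint_ne_zero {n : ℕ} (hn : n ≠ 0) : qint n ≠ 0 :=
  div_ne_zero (qpow_sub_ne_zero hn) qsub_ne_zero

lemma qfac_ne_zero (n : ℕ) : qfac n ≠ 0 := by
  induction n with
  | zero => simp [qfac]
  | succ n ih => exact mul_ne_zero (qint_ne_zero n.succ_ne_zero) ih

lemma qint_one : qint 1 = 1 := by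
  simp [qint, div_self qsub_ne_zero]

lemma qint_mul_qsub (m : ℕ) : qint m * (qv - qv⁻¹) = qv ^ m - qv⁻¹ ^ m :=
  div_mul_cancel₀ _ qsub_ne_zero

lemma qint_succ (n : ℕ) : qint (n + 1) = qv * qint n + qv⁻¹ ^ n := by
  have h0 : qv ≠ 0 := qv_ne_zero
  apply mul_right_cancel₀ qsub_ne_zero
  rw [qint_mul_qsub, add_mul, mul_assoc, qint_mul_qsub, inv_pow, inv_pow]
  field_simp
  ring

lemma qint_succ' (n : ℕ) : qint (n + 1) = qv⁻¹ * qint n + qv ^ n := by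
  have h0 : qv ≠ 0 := qv_ne_zero
  apply mul_right_cancel₀ qsub_ne_zero
  rw [qint_mul_qsub, add_mul, mul_assoc, qint_mul_qsub, inv_pow, inv_pow]
  field_simp
  ring

local notation "X" => θ true
local notation "Y" => θ false

lemma serre (b : Bool) :
    (qv + qv⁻¹) • (θ b * θ (!b) * θ b) = θ b * θ b * θ (!b) + θ (!b) * θ b * θ b := by
  have h := RingQuot.mkAlgHom_rel Qq (SerreRel.serre b)
  simpa [θ, map_smul, map_add, map_mul] using h


def zel : Uminus := X * Y - qv • (Y * X)

lemma xy_eq : X * Y = zel + qv • (Y * X) := by rw [zel, sub_add_cancel]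

lemma rel_zx : zel * X = qv • (X * zel) := by
  have h := serre true
  simp only [Bool.not_true] at h
  have h2 : qv • ((qv + qv⁻¹) • (X * Y * X)) = qv • (X * X * Y + Y * X * X) := by rw [h]
  rw [smul_smul, mul_add, mul_inv_cancel₀ qv_ne_zero, smul_add] at h2
  -- h2 : (qv*qv + 1) • XYX = qv•XXY + qv•YXX
  rw [zel, sub_mul, mul_sub, smul_mul_assoc, mul_smul_comm, smul_sub, smul_smul,
    ← mul_assoc, ← mul_assoc]
  rw [add_smul, one_smul] at h2
  -- goal : XYX - qv•(YXX) = qv•(XXY) - (qv*qv)•(XYX)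
  rw [sub_eq_sub_iff_add_eq_add, add_comm]
  exact h2

lemma rel_yz : Y * zel = qv • (zel * Y) := by
  have h := serre false
  simp only [Bool.not_false] at h
  have h2 : qv • ((qv + qv⁻¹) • (Y * X * Y)) = qv • (Y * Y * X + X * Y * Y) := by rw [h]
  rw [smul_smul, mul_add, mul_inv_cancel₀ qv_ne_zero, smul_add, add_smul, one_smul] at h2
  rw [zel, sub_mul, mul_sub, smul_mul_assoc, mul_smul_comm, smul_sub, smul_smul,
    ← mul_assoc, ← mul_assoc]
  rw [sub_eq_sub_iff_add_eq_add, add_comm]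
  exact h2.trans (add_comm _ _)


lemma rel_xz : X * zel = qv⁻¹ • (zel * X) := by
  rw [rel_zx, smul_smul, inv_mul_cancel₀ qv_ne_zero, one_smul]

lemma rel_zy : zel * Y = qv⁻¹ • (Y * zel) := by
  rw [rel_yz, smul_smul, inv_mul_cancel₀ qv_ne_zero, one_smul]

lemma z_mul_ypow (n : ℕ) : zel * Y ^ n = (qv⁻¹) ^ n • (Y ^ n * zel) := by
  induction n with
  | zero => simp
  | succ n ih =>
    rw [pow_succ', ← mul_assoc, rel_zy, smul_mul_assoc, mul_assoc, ih, mul_smul_comm,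
      smul_smul, ← mul_assoc, ← pow_succ', ← pow_succ']

lemma xpow_mul_z (n : ℕ) : X ^ n * zel = (qv⁻¹) ^ n • (zel * X ^ n) := by
  induction n with
  | zero => simp
  | succ n ih =>
    rw [pow_succ, mul_assoc, rel_xz, mul_smul_comm, ← mul_assoc, ih, smul_mul_assoc,
      smul_smul, mul_assoc, ← pow_succ, ← pow_succ']

lemma x_mul_zpow (n : ℕ) : X * zel ^ n = (qv⁻¹) ^ n • (zel ^ n * X) := by
  induction n with
  | zero => simp
  | succ n ih =>
    rw [pow_succ', ← mul_assoc, rel_xz, smul_mul_assoc, mul_assoc, ih, mul_smul_comm,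
      smul_smul, ← mul_assoc, ← pow_succ', ← pow_succ']

lemma x_mul_ypow (n : ℕ) :
    X * Y ^ (n + 1) = qv ^ (n + 1) • (Y ^ (n + 1) * X) + qint (n + 1) • (Y ^ n * zel) := by
  induction n with
  | zero => simp [qint_one, xy_eq, add_comm]
  | succ n ih =>
    rw [pow_succ' Y (n + 1), ← mul_assoc, xy_eq, add_mul, smul_mul_assoc, mul_assoc, ih,
      z_mul_ypow, qint_succ (n + 1)]
    simp only [mul_add, mul_smul_comm, smul_add, smul_smul, ← mul_assoc, ← pow_succ']
    rw [add_smul]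
    abel

lemma xpow_mul_y (n : ℕ) :
    X ^ (n + 1) * Y = qv ^ (n + 1) • (Y * X ^ (n + 1)) + qint (n + 1) • (zel * X ^ n) := by
  induction n with
  | zero => simp [qint_one, xy_eq, add_comm]
  | succ n ih =>
    rw [pow_succ' X (n + 1), mul_assoc, ih, mul_add, mul_smul_comm, mul_smul_comm,
      ← mul_assoc, ← mul_assoc, xy_eq, rel_xz, qint_succ' (n + 1)]
    simp only [add_mul, smul_mul_assoc, smul_add, smul_smul, mul_assoc, ← pow_succ']
    rw [mul_comm (qint (n + 1)) qv⁻¹, ← pow_succ, add_smul]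
    abel

lemma ypow_z_solve (n : ℕ) :
    Y ^ n * zel = (qint (n + 1))⁻¹ • (X * Y ^ (n + 1) - qv ^ (n + 1) • (Y ^ (n + 1) * X)) := by
  rw [x_mul_ypow, add_sub_cancel_left, inv_smul_smul₀ (qint_ne_zero n.succ_ne_zero)]

lemma z_xpow_solve (n : ℕ) :
    zel * X ^ n = (qint (n + 1))⁻¹ • (X ^ (n + 1) * Y - qv ^ (n + 1) • (Y * X ^ (n + 1))) := by
  rw [xpow_mul_y, add_sub_cancel_left, inv_smul_smul₀ (qint_ne_zero n.succ_ne_zero)]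

/-- helper: middle-factor replacement for Y^m * zel -/
lemma mid_z (A B : Uminus) (m : ℕ) {N : Submodule Qq Uminus}
    (h1 : A * (X * Y ^ (m + 1)) * B ∈ N) (h2 : A * (Y ^ (m + 1) * X) * B ∈ N) :
    A * (Y ^ m * zel) * B ∈ N := by
  rw [ypow_z_solve m, mul_smul_comm, smul_mul_assoc, mul_sub, sub_mul, mul_smul_comm,
    smul_mul_assoc]
  exact N.smul_mem _ (N.sub_mem h1 (N.smul_mem _ h2))

/-- helper: middle-factor replacement for zel * X^m -/
lemma mid_z' (A B : Uminus) (m : ℕ) {N : Submodule Qq Uminus}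
    (h1 : A * (X ^ (m + 1) * Y) * B ∈ N) (h2 : A * (Y * X ^ (m + 1)) * B ∈ N) :
    A * (zel * X ^ m) * B ∈ N := by
  rw [z_xpow_solve m, mul_smul_comm, smul_mul_assoc, mul_sub, sub_mul, mul_smul_comm,
    smul_mul_assoc]
  exact N.smul_mem _ (N.sub_mem h1 (N.smul_mem _ h2))

def Tset (a b : ℕ) : Set Uminus := {w | ∃ k, k ≤ b ∧ w = X ^ (b - k) * Y ^ (a + b) * X ^ k}

def Tset' (b c : ℕ) : Set Uminus := {w | ∃ k, k ≤ b ∧ w = Y ^ k * X ^ (b + c) * Y ^ (b - k)}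

lemma sandwich (a b : ℕ) : Y ^ a * zel ^ b ∈ Submodule.span Qq (Tset a b) := by
  induction b with
  | zero =>
    apply Submodule.subset_span
    exact ⟨0, le_refl 0, by simp⟩
  | succ b ih =>
    have key : ∀ w ∈ Submodule.span Qq (Tset a b), w * zel ∈ Submodule.span Qq (Tset a (b + 1)) := by
      intro w hw
      induction hw using Submodule.span_induction with
      | mem w hw =>
        obtain ⟨k, hk, rfl⟩ := hw
        have E : (X ^ (b - k) * Y ^ (a + b) * X ^ k) * zel
            = (qv⁻¹) ^ k • (X ^ (b - k) * (Y ^ (a + b) * zel) * X ^ k) := by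
          rw [mul_assoc, xpow_mul_z, mul_smul_comm]
          simp only [mul_assoc]
        rw [E]
        apply Submodule.smul_mem
        apply mid_z
        · apply Submodule.subset_span
          refine ⟨k, by omega, ?_⟩
          rw [← mul_assoc (X ^ (b - k)), ← pow_succ]
          have : b - k + 1 = b + 1 - k := by omega
          rw [this, add_assoc]
        · apply Submodule.subset_span
          refine ⟨k + 1, by omega, ?_⟩
          have e1 : b + 1 - (k + 1) = b - k := by omega
          simp only [mul_assoc, ← pow_succ', e1, add_assoc]
      | zero => simp [Submodule.zero_mem]
      | add u v hu hv hu' hv' => rw [add_mul]; exact Submodule.add_mem _ hu' hv'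
      | smul r u hu hu' => rw [smul_mul_assoc]; exact Submodule.smul_mem _ _ hu'
    have : Y ^ a * zel ^ (b + 1) = (Y ^ a * zel ^ b) * zel := by
      rw [pow_succ, mul_assoc]
    rw [this]
    exact key _ ih

lemma sandwich' (b c : ℕ) : zel ^ b * X ^ c ∈ Submodule.span Qq (Tset' b c) := by
  induction b with
  | zero =>
    apply Submodule.subset_span
    exact ⟨0, le_refl 0, by simp⟩
  | succ b ih =>
    have key : ∀ w ∈ Submodule.span Qq (Tset' b c),
        zel * w ∈ Submodule.span Qq (Tset' (b + 1) c) := by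
      intro w hw
      induction hw using Submodule.span_induction with
      | mem w hw =>
        obtain ⟨k, hk, rfl⟩ := hw
        have E : zel * (Y ^ k * X ^ (b + c) * Y ^ (b - k))
            = (qv⁻¹) ^ k • (Y ^ k * (zel * X ^ (b + c)) * Y ^ (b - k)) := by
          rw [← mul_assoc, ← mul_assoc, z_mul_ypow, smul_mul_assoc, smul_mul_assoc]
          simp only [mul_assoc]
        rw [E]
        apply Submodule.smul_mem
        apply mid_z'
        · apply Submodule.subset_span
          refine ⟨k, by omega, ?_⟩
          have e1 : b - k + 1 = b + 1 - k := by omega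
          have e2 : b + c + 1 = b + 1 + c := by omega
          simp only [mul_assoc, ← pow_succ', e1, e2]
        · apply Submodule.subset_span
          refine ⟨k + 1, by omega, ?_⟩
          have e1 : b + 1 - (k + 1) = b - k := by omega
          have e2 : b + c + 1 = b + 1 + c := by omega
          rw [← mul_assoc, ← pow_succ, e1, e2]
      | zero => simp [Submodule.zero_mem]
      | add u v hu hv hu' hv' => rw [mul_add]; exact Submodule.add_mem _ hu' hv'
      | smul r u hu hu' => rw [mul_smul_comm]; exact Submodule.smul_mem _ _ hu'
    have : zel ^ (b + 1) * X ^ c = zel * (zel ^ b * X ^ c) := by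
      rw [pow_succ', mul_assoc]
    rw [this]
    exact key _ ih

def Mset : Set Uminus :=
  {x : Uminus | ∃ a b c : ℕ, b ≥ a + c ∧ x = dp X a * dp Y b * dp X c} ∪
  {x : Uminus | ∃ a b c : ℕ, b > a + c ∧ x = dp Y c * dp X b * dp Y a}

lemma dp_smul (u : Uminus) (n : ℕ) : qfac n • dp u n = u ^ n :=
  smul_inv_smul₀ (qfac_ne_zero n) _

lemma plain_eq (u v : Uminus) (α β γ : ℕ) :
    u ^ α * v ^ β * u ^ γ = (qfac α * qfac β * qfac γ) • (dp u α * dp v β * dp u γ) := by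
  rw [← dp_smul u α, ← dp_smul v β, ← dp_smul u γ]
  simp only [smul_mul_assoc, mul_smul_comm, smul_smul]
  ring_nf

lemma plain1 {α β γ : ℕ} (h : α + γ ≤ β) :
    X ^ α * Y ^ β * X ^ γ ∈ Submodule.span Qq Mset := by
  rw [plain_eq]
  exact Submodule.smul_mem _ _
    (Submodule.subset_span (Or.inl ⟨α, β, γ, h, rfl⟩))

lemma plain2 {α β γ : ℕ} (h : α + γ < β) :
    Y ^ γ * X ^ β * Y ^ α ∈ Submodule.span Qq Mset := by
  rw [plain_eq]
  exact Submodule.smul_mem _ _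
    (Submodule.subset_span (Or.inr ⟨α, β, γ, h, rfl⟩))

lemma pbw_mem (a b c : ℕ) : Y ^ a * zel ^ b * X ^ c ∈ Submodule.span Qq Mset := by
  rcases le_or_gt c a with hca | hca
  · have key : ∀ w ∈ Submodule.span Qq (Tset a b), w * X ^ c ∈ Submodule.span Qq Mset := by
      intro w hw
      induction hw using Submodule.span_induction with
      | mem w hw =>
        obtain ⟨k, hk, rfl⟩ := hw
        rw [mul_assoc, ← pow_add]
        exact plain1 (by omega)
      | zero => simp [Submodule.zero_mem]
      | add u v hu hv hu' hv' => rw [add_mul]; exact Submodule.add_mem _ hu' hv'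
      | smul r u hu hu' => rw [smul_mul_assoc]; exact Submodule.smul_mem _ _ hu'
    exact key _ (sandwich a b)
  · have key : ∀ w ∈ Submodule.span Qq (Tset' b c), Y ^ a * w ∈ Submodule.span Qq Mset := by
      intro w hw
      induction hw using Submodule.span_induction with
      | mem w hw =>
        obtain ⟨k, hk, rfl⟩ := hw
        rw [← mul_assoc, ← mul_assoc, ← pow_add]
        exact plain2 (by omega)
      | zero => simp [Submodule.zero_mem]
      | add u v hu hv hu' hv' => rw [mul_add]; exact Submodule.add_mem _ hu' hv'
      | smul r u hu hu' => rw [mul_smul_comm]; exact Submodule.smul_mem _ _ hu'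
    rw [mul_assoc]
    exact key _ (sandwich' b c)

def Pset : Set Uminus := {w : Uminus | ∃ a b c : ℕ, w = Y ^ a * zel ^ b * X ^ c}

lemma y_mul_mem {u : Uminus} (hu : u ∈ Submodule.span Qq Pset) :
    Y * u ∈ Submodule.span Qq Pset := by
  induction hu using Submodule.span_induction with
  | mem w hw =>
    obtain ⟨a, b, c, rfl⟩ := hw
    apply Submodule.subset_span
    exact ⟨a + 1, b, c, by rw [pow_succ' Y a]; simp only [mul_assoc]⟩
  | zero => simp [Submodule.zero_mem]
  | add u v hu hv hu' hv' => rw [mul_add]; exact Submodule.add_mem _ hu' hv'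
  | smul r u hu hu' => rw [mul_smul_comm]; exact Submodule.smul_mem _ _ hu'

lemma x_mul_mem {u : Uminus} (hu : u ∈ Submodule.span Qq Pset) :
    X * u ∈ Submodule.span Qq Pset := by
  induction hu using Submodule.span_induction with
  | mem w hw =>
    obtain ⟨a, b, c, rfl⟩ := hw
    match a with
    | 0 =>
      have E : X * (Y ^ 0 * zel ^ b * X ^ c)
          = (qv⁻¹) ^ b • (Y ^ 0 * zel ^ b * X ^ (c + 1)) := by
        simp only [pow_zero, one_mul]
        rw [← mul_assoc, x_mul_zpow, smul_mul_assoc, mul_assoc, ← pow_succ']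
      rw [E]
      exact Submodule.smul_mem _ _ (Submodule.subset_span ⟨0, b, c + 1, rfl⟩)
    | a + 1 =>
      have E : X * (Y ^ (a + 1) * zel ^ b * X ^ c)
          = (qv ^ (a + 1) * (qv⁻¹) ^ b) • (Y ^ (a + 1) * zel ^ b * X ^ (c + 1))
            + qint (a + 1) • (Y ^ a * zel ^ (b + 1) * X ^ c) := by
        rw [← mul_assoc, ← mul_assoc, x_mul_ypow a, add_mul, add_mul, smul_mul_assoc,
          smul_mul_assoc, smul_mul_assoc, smul_mul_assoc]
        congr 1
        · rw [mul_assoc (Y ^ (a + 1)), x_mul_zpow, mul_smul_comm, smul_mul_assoc, smul_smul]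
          simp only [mul_assoc, ← pow_succ']
        · rw [mul_assoc (Y ^ a), ← pow_succ']
      rw [E]
      exact Submodule.add_mem _
        (Submodule.smul_mem _ _ (Submodule.subset_span ⟨a + 1, b, c + 1, rfl⟩))
        (Submodule.smul_mem _ _ (Submodule.subset_span ⟨a, b + 1, c, rfl⟩))
  | zero => simp [Submodule.zero_mem]
  | add u v hu hv hu' hv' => rw [mul_add]; exact Submodule.add_mem _ hu' hv'
  | smul r u hu hu' => rw [mul_smul_comm]; exact Submodule.smul_mem _ _ hu'

lemma one_mem_P : (1 : Uminus) ∈ Submodule.span Qq Pset :=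
  Submodule.subset_span ⟨0, 0, 0, by simp⟩

lemma adjoin_top : Algebra.adjoin Qq (Set.range θ) = ⊤ := by
  have hr : Set.range θ
      = ⇑(RingQuot.mkAlgHom Qq SerreRel) '' Set.range (FreeAlgebra.ι Qq) := by
    rw [← Set.range_comp]; rfl
  rw [hr, ← AlgHom.map_adjoin, FreeAlgebra.adjoin_range_ι, Algebra.map_top,
    (AlgHom.range_eq_top _).2 (RingQuot.mkAlgHom_surjective Qq SerreRel)]

lemma P_top (u : Uminus) : u ∈ Submodule.span Qq Pset := by
  have key : ∀ v : Uminus, ∀ w ∈ Submodule.span Qq Pset,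
      v * w ∈ Submodule.span Qq Pset := by
    intro v
    have hv : v ∈ Algebra.adjoin Qq (Set.range θ) := by rw [adjoin_top]; trivial
    induction hv using Algebra.adjoin_induction with
    | mem x hx =>
      obtain ⟨b, rfl⟩ := hx
      cases b with
      | true => exact fun w hw => x_mul_mem hw
      | false => exact fun w hw => y_mul_mem hw
    | algebraMap r =>
      intro w hw
      rw [← Algebra.smul_def]
      exact Submodule.smul_mem _ _ hw
    | add x y hx hy hx' hy' =>
      intro w hw
      rw [add_mul]
      exact Submodule.add_mem _ (hx' w hw) (hy' w hw)
    | mul x y hx hy hx' hy' =>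
      intro w hw
      rw [mul_assoc]
      exact hx' _ (hy' w hw)
  have h := key u 1 one_mem_P
  rwa [mul_one] at h


/-- the elements θ_i^{(a)}θ_j^{(b)}θ_i^{(c)} with b ≥ a + c together
with θ_j^{(c)}θ_i^{(b)}θ_j^{(a)} with b > a + c span f = U_q⁻(𝔰𝔩₃) as a
ℚ(q)-vector space. -/
theorem canonical_monomials_span :
    Submodule.span Qq
      ({x : Uminus | ∃ a b c : ℕ, b ≥ a + c ∧
          x = dp (θ true) a * dp (θ false) b * dp (θ true) c} ∪
       {x : Uminus | ∃ a b c : ℕ, b > a + c ∧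
          x = dp (θ false) c * dp (θ true) b * dp (θ false) a}) = ⊤ := by
  rw [eq_top_iff]
  rintro u -
  have h1 : Submodule.span Qq Pset ≤ Submodule.span Qq Mset :=
    Submodule.span_le.2 (by rintro w ⟨a, b, c, rfl⟩; exact pbw_mem a b c)
  exact h1 (P_top u)

end
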